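/- Let G be an edge-pancyclic simple graph of order n ≥ 10 and diameter d ≥ 5, let x be a vertex of eccentricity d, and for 0 ≤ i ≤ d let V_i be the set of vertices at distance exactly i from x. Then |V_1| ≥ 3, |V_{d−1}| + |V_d| ≥ 4, and |V_i| + |V_{i+1}| ≥ 5 for every i with 1 ≤ i ≤ d − 2. -/

import Mathlib

/-- Number of edges of a simple graph. -/
noncomputable def numEdges {V : Type*} (G : SimpleGraph V) : ℕ := Nat.card G.edgeSet

/-- Every edge of `G` lies in a triangle. -/
def EveryEdgeInTriangle {V : Type*} (G : SimpleGraph V) : Prop :=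
  ∀ ⦃u v : V⦄, G.Adj u v → ∃ w, G.Adj u w ∧ G.Adj v w

/-- `G` is 2-connected: it has at least 3 vertices and deleting any single vertex
leaves a connected graph. -/
def TwoConnected {V : Type*} (G : SimpleGraph V) : Prop :=
  3 ≤ Nat.card V ∧ ∀ v : V, (G.induce ({v}ᶜ : Set V)).Connected

/-- `G` is 3-connected: it has at least 4 vertices and deleting any set of at most 2
vertices leaves a connected graph. -/
def ThreeConnected {V : Type*} (G : SimpleGraph V) : Prop :=
  4 ≤ Nat.card V ∧ ∀ S : Set V, S.ncard ≤ 2 → (G.induce (Sᶜ : Set V)).Connected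

/-- `G` is edge-pancyclic: every edge lies in a cycle of each length `k` with `3 ≤ k ≤ |V|`. -/
def EdgePancyclic {V : Type*} (G : SimpleGraph V) : Prop :=
  ∀ k : ℕ, 3 ≤ k → k ≤ Nat.card V → ∀ ⦃u v : V⦄, G.Adj u v →
    ∃ c : G.Walk u u, c.IsCycle ∧ c.length = k ∧ s(u, v) ∈ c.edges

/-- Base relation for the graph `A_n` (`n = 2q`): vertices `inl i` are the cycle
vertices `vᵢ`, vertices `inr i` are the added vertices `uᵢ`; `vᵢ ~ vᵢ₊₁`,
`uᵢ ~ vᵢ` and `uᵢ ~ vᵢ₊₁`. -/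
def ARel (q : ℕ) : (ZMod q ⊕ ZMod q) → (ZMod q ⊕ ZMod q) → Prop :=
  fun x y => match x, y with
    | Sum.inl a, Sum.inl b => a = b + 1
    | Sum.inr a, Sum.inl b => b = a ∨ b = a + 1
    | _, _ => False

/-- The graph `A_n` where `n = 2q`. -/
def graphA (q : ℕ) : SimpleGraph (ZMod q ⊕ ZMod q) := SimpleGraph.fromRel (ARel q)

/-- The graph `F_n` where `n = 2q + 1`: `A_{n-1}` plus a new vertex (`none`)
adjacent to `v₁` and `v₂`. -/
def graphF (q : ℕ) : SimpleGraph (Option (ZMod q ⊕ ZMod q)) :=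
  SimpleGraph.fromRel (fun x y => match x, y with
    | some a, some b => ARel q a b
    | none, some w => w = Sum.inl 1 ∨ w = Sum.inl 2
    | _, _ => False)

/-- The graph `G_n` where `n = 2q + 1`: `A_{n-1}` plus a new vertex (`none`)
adjacent to `u₁` and `v₁`. -/
def graphG (q : ℕ) : SimpleGraph (Option (ZMod q ⊕ ZMod q)) :=
  SimpleGraph.fromRel (fun x y => match x, y with
    | some a, some b => ARel q a b
    | none, some w => w = Sum.inr 1 ∨ w = Sum.inl 1
    | _, _ => False)

/-- The graph `H_n` where `n = 2q + 1`: `A_{n-1}` with the edge `v₁v₂` subdivided by a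
new vertex (`none`), which is moreover joined to `u₁`. -/
def graphH (q : ℕ) : SimpleGraph (Option (ZMod q ⊕ ZMod q)) :=
  SimpleGraph.fromRel (fun x y => match x, y with
    | some (Sum.inl a), some (Sum.inl b) =>
        a = b + 1 ∧ ¬(a = 2 ∧ b = 1) ∧ ¬(a = 1 ∧ b = 2)
    | some a, some b => ARel q a b
    | none, some w => w = Sum.inl 1 ∨ w = Sum.inl 2 ∨ w = Sum.inr 1
    | _, _ => False)

/-- The wheel graph of order `n`: the hub `none` joined to every vertex of the
cycle `C_{n-1}` on `ZMod (n-1)`. -/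
def wheelGraph (n : ℕ) : SimpleGraph (Option (ZMod (n - 1))) :=
  SimpleGraph.fromRel (fun x y => match x, y with
    | some a, some b => a = b + 1
    | none, some _ => True
    | _, _ => False)
section AuxStmt14

open SimpleGraph Walk

variable {V : Type*} {G : SimpleGraph V}

lemma aux_cl3 {X Y : Set V} (hsep : ∀ u ∈ X, ∀ v ∈ Y, ¬G.Adj u v) :
    ∀ {u v : V} (w : G.Walk u v), (∀ z ∈ w.support, z ∈ X ∪ Y) → u ∈ X →
      ∀ z ∈ w.support, z ∈ X := by
  intro u v w
  induction w with
  | nil =>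
      intro _ hu z hz
      simp only [Walk.support_nil, List.mem_singleton] at hz
      subst hz; exact hu
  | @cons a b c hadj p ih =>
      intro hsub hu z hz
      have hb : b ∈ X := by
        have hbXY : b ∈ X ∪ Y := hsub b (by simp [Walk.support_cons])
        rcases hbXY with hb | hb
        · exact hb
        · exact absurd hadj (hsep a hu b hb)
      have hsub' : ∀ z ∈ p.support, z ∈ X ∪ Y := fun z hz =>
        hsub z (by simp [Walk.support_cons, hz])
      rw [Walk.support_cons, List.mem_cons] at hz
      rcases hz with rfl | hz
      · exact hu
      · exact ih hsub' hb z hz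

lemma aux_core [DecidableEq V] {X Y : Set V} (hsep : ∀ u ∈ X, ∀ v ∈ Y, ¬G.Adj u v)
    (hdisj : Disjoint X Y)
    {u v x₀ y₀ : V} (w : G.Walk u v) (hsub : ∀ z ∈ w.support, z ∈ X ∪ Y)
    (hxm : x₀ ∈ w.support) (hym : y₀ ∈ w.support) (hx₀ : x₀ ∈ X) (hy₀ : y₀ ∈ Y) : False := by
  have hy' : y₀ ∈ X := by
    rw [← Walk.take_spec w hxm, Walk.mem_support_append_iff] at hym
    rcases hym with hym | hym
    · exact aux_cl3 (G := G) (X := X) (Y := Y) hsep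
        (w.takeUntil x₀ hxm).reverse
        (fun z hz => hsub z (by
          rw [Walk.support_reverse, List.mem_reverse] at hz
          exact Walk.support_takeUntil_subset w hxm hz)) hx₀ y₀
        (by rw [Walk.support_reverse, List.mem_reverse]; exact hym)
    · exact aux_cl3 (G := G) hsep (w.dropUntil x₀ hxm)
        (fun z hz => hsub z (Walk.support_dropUntil_subset w hxm hz)) hx₀ y₀ hym
  exact hdisj.ne_of_mem hy' hy₀ rfl

/-- In a path starting at `a`, an edge `s(a,b)` must be the first edge. -/
lemma aux_snd {a b v : V} (p : G.Walk a v) (hp : p.IsPath) (he : s(a, b) ∈ p.edges) :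
    ∃ (h : G.Adj a b) (q : G.Walk b v), p = Walk.cons h q := by
  cases p with
  | nil => simp at he
  | @cons _ w _ hadj q =>
      rw [Walk.edges_cons, List.mem_cons] at he
      rcases he with he | he
      · have hb : b = w := by
          rcases Sym2.eq_iff.mp he with ⟨-, rfl⟩ | ⟨h1, h2⟩
          · rfl
          · exact h2.trans h1
        subst hb
        exact ⟨hadj, q, rfl⟩
      · exfalso
        have : a ∈ q.support := Walk.fst_mem_support_of_mem_edges q he
        rw [Walk.cons_isPath_iff] at hp
        exact hp.2 this

/-- A cycle whose length is the number of vertices passes through every vertex. -/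
lemma aux_cover [Fintype V] {a : V} (c : G.Walk a a) (hc : c.IsCycle)
    (hlen : c.length = Fintype.card V) : ∀ v : V, v ∈ c.support := by
  classical
  intro v
  have hnd : c.support.tail.Nodup := hc.support_nodup
  have hlen' : c.support.tail.length = Fintype.card V := by
    have h1 := Walk.length_support c
    have h2 : c.support.length = c.support.tail.length + 1 := by
      cases hs : c.support with
      | nil => simp [hs] at h1
      | cons hd tl => simp
    omega
  have : c.support.tail.toFinset = Finset.univ := by
    apply Finset.eq_univ_of_card
    rw [List.toFinset_card_of_nodup hnd, hlen']
  have hv : v ∈ c.support.tail := by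
    rw [← List.mem_toFinset, this]; exact Finset.mem_univ v
  exact List.mem_of_mem_tail hv

lemma aux_main [DecidableEq V] {X Y : Set V} (hsep : ∀ u ∈ X, ∀ v ∈ Y, ¬G.Adj u v)
    (hdisj : Disjoint X Y) {x₀ y₀ a b : V} (hx₀ : x₀ ∈ X) (hy₀ : y₀ ∈ Y)
    (haX : a ∉ X ∪ Y) (hbX : b ∉ X ∪ Y) (hcov : ∀ v, v ≠ a → v ≠ b → v ∈ X ∪ Y)
    {u : V} (q : G.Walk b u) (hqnd : q.support.Nodup) (haq : a ∉ q.support)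
    (hqcov : ∀ z, z ≠ a → z ∈ q.support) : False := by
  have hxa : x₀ ≠ a := fun h => haX (h ▸ Or.inl hx₀)
  have hxb : x₀ ≠ b := fun h => hbX (h ▸ Or.inl hx₀)
  have hya : y₀ ≠ a := fun h => haX (h ▸ Or.inr hy₀)
  have hyb : y₀ ≠ b := fun h => hbX (h ▸ Or.inr hy₀)
  cases q with
  | nil =>
      have := hqcov x₀ hxa
      simp only [Walk.support_nil, List.mem_singleton] at this
      exact hxb this
  | @cons _ w _ h r =>
      have hsupp : ∀ z, z ≠ a → z ≠ b → z ∈ r.support := by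
        intro z hza hzb
        have := hqcov z hza
        rw [Walk.support_cons, List.mem_cons] at this
        rcases this with rfl | hz
        · exact absurd rfl hzb
        · exact hz
      have hbr : b ∉ r.support := by
        rw [Walk.support_cons] at hqnd
        exact (List.nodup_cons.mp hqnd).1
      have har : a ∉ r.support := fun h' => haq (by rw [Walk.support_cons]; exact List.mem_cons_of_mem _ h')
      exact aux_core hsep hdisj r
        (fun z hz => hcov z (fun h' => har (h' ▸ hz)) (fun h' => hbr (h' ▸ hz)))
        (hsupp x₀ hxa hxb) (hsupp y₀ hya hyb) hx₀ hy₀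

/-- A vertex `a` alone cannot separate a spanning cycle. -/
lemma aux_key1 [DecidableEq V] {a : V} (c : G.Walk a a) (hc : c.IsCycle)
    (hall : ∀ v, v ∈ c.support) {X Y : Set V} {x₀ y₀ : V}
    (hsep : ∀ u ∈ X, ∀ v ∈ Y, ¬G.Adj u v) (hdisj : Disjoint X Y)
    (hx₀ : x₀ ∈ X) (hy₀ : y₀ ∈ Y) (haX : a ∉ X ∪ Y)
    (hcov : ∀ v, v ≠ a → v ∈ X ∪ Y) : False := by
  have hxa : x₀ ≠ a := fun h => haX (h ▸ Or.inl hx₀)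
  have hya : y₀ ≠ a := fun h => haX (h ▸ Or.inr hy₀)
  cases c with
  | nil => exact Walk.IsCycle.not_of_nil hc
  | @cons _ u _ hadj p =>
      have hp : p.IsPath := ((Walk.cons_isCycle_iff p hadj).mp hc).1
      have hpall : ∀ v, v ∈ p.support := by
        intro v
        have := hall v
        rw [Walk.support_cons, List.mem_cons] at this
        rcases this with rfl | hv
        · exact p.end_mem_support
        · exact hv
      cases hpr : p.reverse with
      | nil => exact hadj.ne rfl
      | @cons _ w _ h₂ q =>
          have hrs : p.support.reverse = a :: q.support := by
            rw [← Walk.support_reverse, hpr, Walk.support_cons]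
          have hnd : (a :: q.support).Nodup := by
            rw [← hrs, List.nodup_reverse]; exact hp.support_nodup
          have haq : a ∉ q.support := (List.nodup_cons.mp hnd).1
          have hqcov : ∀ z, z ≠ a → z ∈ q.support := by
            intro z hz
            have : z ∈ p.support.reverse := by rw [List.mem_reverse]; exact hpall z
            rw [hrs, List.mem_cons] at this
            rcases this with rfl | h
            · exact absurd rfl hz
            · exact h
          exact aux_core hsep hdisj q
            (fun z hz => hcov z (fun h' => haq (h' ▸ hz)))
            (hqcov x₀ hxa) (hqcov y₀ hya) hx₀ hy₀

/-- Two vertices `a, b` joined by a cycle edge cannot separate a spanning cycle. -/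
lemma aux_key2 [DecidableEq V] {a b : V} (c : G.Walk a a) (hc : c.IsCycle)
    (hall : ∀ v, v ∈ c.support) (he : s(a, b) ∈ c.edges) {X Y : Set V} {x₀ y₀ : V}
    (hsep : ∀ u ∈ X, ∀ v ∈ Y, ¬G.Adj u v) (hdisj : Disjoint X Y)
    (hx₀ : x₀ ∈ X) (hy₀ : y₀ ∈ Y) (haX : a ∉ X ∪ Y) (hbX : b ∉ X ∪ Y)
    (hcov : ∀ v, v ≠ a → v ≠ b → v ∈ X ∪ Y) : False := by
  cases c with
  | nil => exact Walk.IsCycle.not_of_nil hc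
  | @cons _ u _ hadj p =>
      have hp : p.IsPath := ((Walk.cons_isCycle_iff p hadj).mp hc).1
      have hpall : ∀ v, v ∈ p.support := by
        intro v
        have hv := hall v
        rw [Walk.support_cons, List.mem_cons] at hv
        rcases hv with rfl | hv
        · exact p.end_mem_support
        · exact hv
      rw [Walk.edges_cons, List.mem_cons] at he
      rcases he with he | he
      · -- first edge: b = u
        have hb : b = u := by
          rcases Sym2.eq_iff.mp he with ⟨-, rfl⟩ | ⟨h1, -⟩
          · rfl
          · exact absurd h1 hadj.ne
        subst hb
        -- strip the final `a` from p : Walk b a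
        cases hpr : p.reverse with
        | nil => exact hadj.ne rfl
        | @cons _ w _ h₂ q =>
            have hrs : p.support.reverse = a :: q.support := by
              rw [← Walk.support_reverse, hpr, Walk.support_cons]
            have hnd : (a :: q.support).Nodup := by
              rw [← hrs, List.nodup_reverse]; exact hp.support_nodup
            have haq : a ∉ q.support := (List.nodup_cons.mp hnd).1
            have hqcov : ∀ z, z ≠ a → z ∈ q.support := by
              intro z hz
              have hz2 : z ∈ p.support.reverse := by rw [List.mem_reverse]; exact hpall z
              rw [hrs, List.mem_cons] at hz2
              rcases hz2 with rfl | h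
              · exact absurd rfl hz
              · exact h
            -- q : Walk w b ; use q.reverse : Walk b w
            exact aux_main hsep hdisj hx₀ hy₀ haX hbX hcov q.reverse
              (by rw [Walk.support_reverse, List.nodup_reverse]; exact (List.nodup_cons.mp hnd).2)
              (by rw [Walk.support_reverse, List.mem_reverse]; exact haq)
              (fun z hz => by
                rw [Walk.support_reverse, List.mem_reverse]; exact hqcov z hz)
      · -- edge inside p
        have he' : s(a, b) ∈ p.reverse.edges := by
          rw [Walk.edges_reverse, List.mem_reverse]; exact he
        obtain ⟨h', q, hq⟩ := aux_snd p.reverse hp.reverse he'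
        have hqpath : q.IsPath := by
          have := hp.reverse
          rw [hq, Walk.cons_isPath_iff] at this
          exact this.1
        have haq : a ∉ q.support := by
          have := hp.reverse
          rw [hq, Walk.cons_isPath_iff] at this
          exact this.2
        have hqcov : ∀ z, z ≠ a → z ∈ q.support := by
          intro z hz
          have hz2 : z ∈ p.reverse.support := by
            rw [Walk.support_reverse, List.mem_reverse]; exact hpall z
          rw [hq, Walk.support_cons, List.mem_cons] at hz2
          rcases hz2 with rfl | h
          · exact absurd rfl hz
          · exact h
        exact aux_main hsep hdisj hx₀ hy₀ haX hbX hcov q hqpath.support_nodup haq hqcov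

/-- Every edge of an edge-pancyclic graph lies in a triangle, with the third vertex distinct. -/
lemma aux_tri (hep : EdgePancyclic G) (hn : 3 ≤ Nat.card V) {u v : V} (h : G.Adj u v) :
    ∃ w, w ≠ u ∧ w ≠ v ∧ G.Adj u w ∧ G.Adj v w := by
  obtain ⟨c, hc, hlen, he⟩ := hep 3 le_rfl hn h
  cases c with
  | nil => simp at hlen
  | @cons _ p₁ _ h1 c₁ =>
  cases c₁ with
  | nil => simp at hlen
  | @cons _ p₂ _ h2 c₂ =>
  cases c₂ with
  | nil => simp at hlen
  | @cons _ p₃ _ h3 c₃ =>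
  cases c₃ with
  | @cons _ p₄ _ h4 c₄ =>
      simp only [Walk.length_cons] at hlen
      omega
  | nil =>
    -- cycle u → p₁ → p₂ → u
    have hnd : [p₁, p₂, u].Nodup := by
      have := hc.support_nodup
      simpa using this
    have hne12 : p₁ ≠ p₂ := by simp at hnd; tauto
    have hne1u : p₁ ≠ u := by simp at hnd; tauto
    have hne2u : p₂ ≠ u := by simp at hnd; tauto
    have hedges : s(u, v) = s(u, p₁) ∨ s(u, v) = s(p₁, p₂) ∨ s(u, v) = s(p₂, u) := by
      simpa using he
    rcases hedges with he' | he' | he'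
    · -- v = p₁ : take w = p₂
      have hv : v = p₁ := by
        rcases Sym2.eq_iff.mp he' with ⟨-, h2'⟩ | ⟨-, h2'⟩
        · exact h2'
        · exact absurd h2'.symm h.ne
      subst hv
      exact ⟨p₂, hne2u, hne12.symm, h3.symm, h2⟩
    · -- s(u,v) = s(p₁,p₂) : impossible since u ∉ {p₁,p₂}
      exfalso
      rcases Sym2.eq_iff.mp he' with ⟨h1', -⟩ | ⟨h1', -⟩
      · exact hne1u h1'.symm
      · exact hne2u h1'.symm
    · -- v = p₂ : take w = p₁
      have hv : v = p₂ := by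
        rcases Sym2.eq_iff.mp he' with ⟨-, h2'⟩ | ⟨-, h2'⟩
        · exact absurd h2'.symm h.ne
        · exact h2'
      subst hv
      exact ⟨p₁, hne1u, hne12, h1, h2.symm⟩

lemma aux_ham [Fintype V] (hep : EdgePancyclic G) (hn3 : 3 ≤ Nat.card V) {u v : V}
    (h : G.Adj u v) :
    ∃ c : G.Walk u u, c.IsCycle ∧ (∀ z, z ∈ c.support) ∧ s(u, v) ∈ c.edges := by
  obtain ⟨c, hc, hlen, he⟩ := hep (Nat.card V) hn3 le_rfl h
  exact ⟨c, hc, aux_cover c hc (by rw [hlen, Nat.card_eq_fintype_card]), he⟩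

lemma aux_adj_dist (hconn : G.Connected) {u v w : V} (h : G.Adj v w) :
    G.dist u w ≤ G.dist u v + 1 := by
  have h1 : G.dist u w ≤ G.dist u v + G.dist v w := hconn.dist_triangle
  have h2 : G.dist v w ≤ 1 := by
    have := SimpleGraph.dist_le (Walk.cons h Walk.nil)
    simpa using this
  omega

lemma aux_pred (hconn : G.Connected) {x v : V} {k : ℕ} (hv : G.dist x v = k + 1) :
    ∃ u, G.Adj u v ∧ G.dist x u = k := by
  obtain ⟨p, hp⟩ := (hconn x v).exists_walk_length_eq_dist
  rw [hv] at hp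
  cases hq : p.reverse with
  | nil =>
      have := congrArg Walk.length hq
      rw [Walk.length_reverse, hp] at this
      simp at this
  | @cons _ u _ h q =>
      have hlen : q.length = k := by
        have := congrArg Walk.length hq
        rw [Walk.length_reverse, hp] at this
        simp only [Walk.length_cons] at this
        omega
      refine ⟨u, h.symm, ?_⟩
      have hle : G.dist x u ≤ k := by
        have := SimpleGraph.dist_le q.reverse
        rwa [Walk.length_reverse, hlen] at this
      have hge : k + 1 ≤ G.dist x u + 1 := by
        rw [← hv]
        exact aux_adj_dist hconn h.symm
      omega

lemma aux_layer (hconn : G.Connected) {x : V} {d : ℕ} (hz : ∃ v, G.dist x v = d) :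
    ∀ t, t ≤ d → ∃ v, G.dist x v = t := by
  have key : ∀ s, ∃ v, G.dist x v = d - s := by
    intro s
    induction s with
    | zero => simpa using hz
    | succ s ih =>
        obtain ⟨v, hv⟩ := ih
        by_cases h0 : d - s = 0
        · exact ⟨v, by omega⟩
        · have : G.dist x v = (d - (s + 1)) + 1 := by omega
          obtain ⟨u, _, hu⟩ := aux_pred hconn this
          exact ⟨u, hu⟩
  intro t ht
  obtain ⟨v, hv⟩ := key (d - t)
  exact ⟨v, by omega⟩

lemma aux_deg3 [Fintype V] [DecidableEq V] (hep : EdgePancyclic G) (hn : 10 ≤ Nat.card V)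
    {v a : V} (hadj : G.Adj v a) (hsmall : (G.neighborSet v).ncard ≤ 2) : False := by
  obtain ⟨w, hwv, hwa, hvw, haw⟩ := aux_tri hep (by omega) hadj
  have hsub : ({a, w} : Set V) ⊆ G.neighborSet v := by
    intro u hu
    rcases hu with rfl | hu
    · exact hadj
    · rw [Set.mem_singleton_iff] at hu; subst hu; exact hvw
  have heq : ({a, w} : Set V) = G.neighborSet v :=
    Set.eq_of_subset_of_ncard_le hsub
      (by rw [Set.ncard_pair (Ne.symm hwa)]; exact hsmall) (Set.toFinite _)
  obtain ⟨c, hc, hall, he⟩ := aux_ham hep (by omega) haw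
  set Y : Set V := {u | u ≠ v ∧ u ≠ a ∧ u ≠ w} with hY
  have hy₀ : ∃ y₀, y₀ ∈ Y := by
    by_contra hcon
    push_neg at hcon
    have hsub' : (Set.univ : Set V) ⊆ {v, a, w} := by
      intro u _
      have := hcon u
      simp only [hY, Set.mem_setOf_eq, not_and_or, not_not] at this
      simp only [Set.mem_insert_iff, Set.mem_singleton_iff]
      tauto
    have hle := Set.ncard_le_ncard hsub' (Set.toFinite _)
    rw [Set.ncard_univ] at hle
    have h3 : ({v, a, w} : Set V).ncard ≤ 3 := by
      refine le_trans (Set.ncard_insert_le _ _) ?_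
      have := Set.ncard_insert_le a ({w} : Set V)
      simp [Set.ncard_singleton] at this ⊢
      omega
    omega
  obtain ⟨y₀, hy₀⟩ := hy₀
  have hy' := hy₀
  rw [hY, Set.mem_setOf_eq] at hy'
  refine aux_key2 c hc hall he (X := {v}) (Y := Y) ?_ ?_ rfl hy₀ ?_ ?_ ?_
  · intro u hu y hy hadj'
    rw [Set.mem_singleton_iff] at hu; subst hu
    have : y ∈ G.neighborSet u := hadj'
    rw [← heq] at this
    rw [hY, Set.mem_setOf_eq] at hy
    rcases this with rfl | hthis
    · exact hy.2.1 rfl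
    · rw [Set.mem_singleton_iff] at hthis; exact hy.2.2 hthis
  · rw [Set.disjoint_left]
    intro u hu hu'
    rw [Set.mem_singleton_iff] at hu; subst hu
    rw [hY, Set.mem_setOf_eq] at hu'
    exact hu'.1 rfl
  · intro h
    rcases h with h | h
    · rw [Set.mem_singleton_iff] at h; exact hadj.ne h.symm
    · rw [hY, Set.mem_setOf_eq] at h; exact h.2.1 rfl
  · intro h
    rcases h with h | h
    · rw [Set.mem_singleton_iff] at h; exact hwv h
    · rw [hY, Set.mem_setOf_eq] at h; exact h.2.2 rfl
  · intro u hua huw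
    by_cases huv : u = v
    · exact Or.inl (by rw [Set.mem_singleton_iff]; exact huv)
    · exact Or.inr (by rw [hY, Set.mem_setOf_eq]; exact ⟨huv, hua, huw⟩)

end AuxStmt14

/-- Layer bounds for an edge-pancyclic graph of order `n ≥ 10` and
diameter `d ≥ 5`, where `x` is a vertex of eccentricity `d` and
`V_i = {v | dist x v = i}`. -/
theorem stmt_14 {V : Type*} (G : SimpleGraph V)
    (hn : 10 ≤ Nat.card V) (hep : EdgePancyclic G)
    (d : ℕ) (hd : 5 ≤ d) (hdiam : G.diam = d)
    (x : V) (hecc_le : ∀ v : V, G.dist x v ≤ d) (hecc : ∃ v : V, G.dist x v = d) :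
    3 ≤ {v : V | G.dist x v = 1}.ncard ∧
    4 ≤ {v : V | G.dist x v = d - 1}.ncard + {v : V | G.dist x v = d}.ncard ∧
    ∀ i : ℕ, 1 ≤ i → i ≤ d - 2 →
      5 ≤ {v : V | G.dist x v = i}.ncard + {v : V | G.dist x v = i + 1}.ncard := by
  classical
  have hfin : Finite V := Nat.finite_of_card_ne_zero (by omega)
  letI : Fintype V := Fintype.ofFinite V
  obtain ⟨z, hz⟩ := hecc
  -- x has a neighbor
  have hreach : G.Reachable x z := SimpleGraph.Reachable.of_dist_ne_zero (by omega)
  have hxnbr : ∃ u, G.Adj x u := by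
    obtain ⟨p⟩ := hreach
    cases p with
    | nil => rw [SimpleGraph.dist_self] at hz; omega
    | cons h q => exact ⟨_, h⟩
  obtain ⟨u₀, hu₀⟩ := hxnbr
  obtain ⟨c₀, hc₀, hall₀, -⟩ := aux_ham hep (by omega) hu₀
  -- connectivity
  have hconn : G.Connected := by
    rw [SimpleGraph.connected_iff]
    refine ⟨fun a b => ?_, ⟨x⟩⟩
    have ha : G.Reachable x a := ⟨c₀.takeUntil a (hall₀ a)⟩
    have hb : G.Reachable x b := ⟨c₀.takeUntil b (hall₀ b)⟩
    exact ha.symm.trans hb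
  have hlayer := aux_layer hconn ⟨z, hz⟩
  -- separation facts for thresholds
  have hsep : ∀ t : ℕ, ∀ u ∈ {v : V | G.dist x v < t}, ∀ w ∈ {v : V | G.dist x v > t},
      ¬G.Adj u w := by
    intro t u hu w hw hadj
    rw [Set.mem_setOf_eq] at hu hw
    have := aux_adj_dist hconn (u := x) hadj
    omega
  have hdisj : ∀ t : ℕ, Disjoint {v : V | G.dist x v < t} {v : V | G.dist x v > t} := by
    intro t
    rw [Set.disjoint_left]
    intro u hu hu'
    rw [Set.mem_setOf_eq] at hu hu'
    omega
  -- every layer 1 ≤ t < d has at least 2 vertices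
  have hclaim2 : ∀ t : ℕ, 1 ≤ t → t < d → 2 ≤ {v : V | G.dist x v = t}.ncard := by
    intro t h1t htd
    by_contra hcon
    push_neg at hcon
    have hne : {v : V | G.dist x v = t}.Nonempty := hlayer t (by omega)
    have h1 : {v : V | G.dist x v = t}.ncard = 1 := by
      have := (Set.ncard_pos (Set.toFinite _)).mpr hne
      omega
    obtain ⟨w₀, hw₀⟩ := Set.ncard_eq_one.mp h1
    have hw₀d : G.dist x w₀ = t := by
      have : w₀ ∈ {v : V | G.dist x v = t} := by rw [hw₀]; rfl
      exact this
    obtain ⟨u, huw, -⟩ := aux_pred hconn (show G.dist x w₀ = (t - 1) + 1 by omega)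
    obtain ⟨c, hc, hall, -⟩ := aux_ham hep (by omega) huw.symm
    refine aux_key1 c hc hall (X := {v : V | G.dist x v < t}) (Y := {v : V | G.dist x v > t})
      (hsep t) (hdisj t) (x₀ := x) (y₀ := z) ?_ ?_ ?_ ?_
    · rw [Set.mem_setOf_eq, SimpleGraph.dist_self]; omega
    · rw [Set.mem_setOf_eq, hz]; omega
    · intro h
      rcases h with h | h <;> rw [Set.mem_setOf_eq] at h <;> omega
    · intro v hv
      have : G.dist x v ≠ t := by
        intro h
        exact hv (by
          have : v ∈ {v : V | G.dist x v = t} := h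
          rw [hw₀, Set.mem_singleton_iff] at this
          exact this)
      by_cases hlt : G.dist x v < t
      · exact Or.inl hlt
      · exact Or.inr (by rw [Set.mem_setOf_eq]; omega)
  -- a two-element layer has no edge inside, via key2; packaged:
  have hpair : ∀ t : ℕ, 1 ≤ t → t < d → ∀ p w : V, G.dist x p = t → G.dist x w = t →
      p ≠ w → G.Adj p w → {v : V | G.dist x v = t}.ncard ≤ 2 → False := by
    intro t h1t htd p w hp hw hpw hadj hle
    have hsub : ({p, w} : Set V) ⊆ {v : V | G.dist x v = t} := by
      intro u hu
      rcases hu with rfl | hu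
      · exact hp
      · rw [Set.mem_singleton_iff] at hu; subst hu; exact hw
    have heq : ({p, w} : Set V) = {v : V | G.dist x v = t} :=
      Set.eq_of_subset_of_ncard_le hsub
        (by rw [Set.ncard_pair hpw]; exact hle) (Set.toFinite _)
    obtain ⟨c, hc, hall, he⟩ := aux_ham hep (by omega) hadj
    refine aux_key2 c hc hall he (X := {v : V | G.dist x v < t}) (Y := {v : V | G.dist x v > t})
      (hsep t) (hdisj t) (x₀ := x) (y₀ := z) ?_ ?_ ?_ ?_ ?_
    · rw [Set.mem_setOf_eq, SimpleGraph.dist_self]; omega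
    · rw [Set.mem_setOf_eq, hz]; omega
    · intro h
      rcases h with h | h <;> rw [Set.mem_setOf_eq] at h <;> omega
    · intro h
      rcases h with h | h <;> rw [Set.mem_setOf_eq] at h <;> omega
    · intro v hvp hvw
      have : G.dist x v ≠ t := by
        intro h
        have hv : v ∈ ({p, w} : Set V) := by rw [heq]; exact h
        rcases hv with rfl | hv
        · exact hvp rfl
        · rw [Set.mem_singleton_iff] at hv; exact hvw hv
      by_cases hlt : G.dist x v < t
      · exact Or.inl hlt
      · exact Or.inr (by rw [Set.mem_setOf_eq]; omega)
  refine ⟨?_, ?_, ?_⟩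
  · -- |V₁| ≥ 3
    by_contra hcon
    push_neg at hcon
    have h2 : {v : V | G.dist x v = 1}.ncard ≤ 2 := by omega
    have hset : {v : V | G.dist x v = 1} = G.neighborSet x := by
      ext u
      rw [Set.mem_setOf_eq, SimpleGraph.mem_neighborSet]
      exact SimpleGraph.dist_eq_one_iff_adj
    obtain ⟨a, ha⟩ := hlayer 1 (by omega)
    have hadj : G.Adj x a := SimpleGraph.dist_eq_one_iff_adj.mp ha
    rw [hset] at h2
    exact aux_deg3 hep hn hadj h2
  · -- |V_{d-1}| + |V_d| ≥ 4
    by_contra hcon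
    push_neg at hcon
    have h3 : {v : V | G.dist x v = d - 1}.ncard + {v : V | G.dist x v = d}.ncard ≤ 3 := by omega
    have hNz : G.neighborSet z ⊆
        ({v : V | G.dist x v = d - 1} ∪ {v : V | G.dist x v = d}) \ {z} := by
      intro u hu
      rw [SimpleGraph.mem_neighborSet] at hu
      have h1 : G.dist x u ≤ d := hecc_le u
      have h2 : G.dist x z ≤ G.dist x u + 1 := aux_adj_dist hconn hu.symm
      constructor
      · rcases Nat.lt_or_ge (G.dist x u) d with hlt | hge
        · exact Or.inl (by rw [Set.mem_setOf_eq]; omega)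
        · exact Or.inr (by rw [Set.mem_setOf_eq]; omega)
      · rw [Set.mem_singleton_iff]
        exact hu.ne'
    have hzc : {v : V | G.dist x v = d}.ncard ≥ 1 := by
      have := (Set.ncard_pos (s := {v : V | G.dist x v = d}) (Set.toFinite _)).mpr ⟨z, hz⟩
      omega
    have hcard : (G.neighborSet z).ncard ≤ 2 := by
      have hle1 := Set.ncard_le_ncard hNz (Set.toFinite _)
      have hzin : z ∈ {v : V | G.dist x v = d - 1} ∪ {v : V | G.dist x v = d} :=
        Or.inr (by rw [Set.mem_setOf_eq]; exact hz)
      have hle2 := Set.ncard_diff_singleton_of_mem hzin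
      have hle3 := Set.ncard_union_le {v : V | G.dist x v = d - 1} {v : V | G.dist x v = d}
      omega
    obtain ⟨u, huz, -⟩ := aux_pred hconn (show G.dist x z = (d - 1) + 1 by omega)
    exact aux_deg3 hep hn huz.symm hcard
  · -- |V_i| + |V_{i+1}| ≥ 5
    intro i h1i hid
    by_contra hcon
    push_neg at hcon
    have h4 : {v : V | G.dist x v = i}.ncard + {v : V | G.dist x v = i + 1}.ncard ≤ 4 := by omega
    have hc2i := hclaim2 i h1i (by omega)
    have hc2i1 := hclaim2 (i + 1) (by omega) (by omega)
    obtain ⟨q₀, hq₀⟩ := hlayer (i + 1) (by omega)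
    obtain ⟨p₀, hpq, hp₀⟩ := aux_pred hconn hq₀
    obtain ⟨w, hwp, hwq, hpw, hqw⟩ := aux_tri hep (by omega) hpq
    have hwd1 : G.dist x w ≤ i + 1 := by
      have := aux_adj_dist hconn (u := x) hpw
      omega
    have hwd2 : i ≤ G.dist x w := by
      have := aux_adj_dist hconn (u := x) hqw.symm
      omega
    rcases Nat.eq_or_lt_of_le hwd2 with hwi | hlt
    · -- dist x w = i : pair p₀ w in layer i
      exact hpair i h1i (by omega) p₀ w hp₀ hwi.symm (Ne.symm hwp) hpw (by omega)
    · -- dist x w = i + 1 : pair q₀ w in layer i+1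
      have hwi1 : G.dist x w = i + 1 := by omega
      exact hpair (i + 1) (by omega) (by omega) q₀ w hq₀ hwi1 (Ne.symm hwq) hqw (by omega)
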